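/- Let G be a topological group with the invariant Steinhaus property with exponent k. Then every group homomorphism π : G → H into a separable SIN topological group H is continuous. -/

import Mathlib

open Pointwise

private lemma exists_nhds_one_pow_subset' {H : Type*} [Group H] [TopologicalSpace H]
    [IsTopologicalGroup H] (n : ℕ) :
    ∀ U ∈ nhds (1 : H), ∃ V : Set H, IsOpen V ∧ (1 : H) ∈ V ∧ V ^ n ⊆ U := by
  induction n with
  | zero =>
    intro U hU
    obtain ⟨V, hVo, hV1, -⟩ := exists_open_nhds_one_mul_subset hU
    refine ⟨V, hVo, hV1, ?_⟩
    simp only [pow_zero]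
    intro x hx
    rw [Set.mem_one] at hx
    subst hx
    exact mem_of_mem_nhds hU
  | succ n ih =>
    intro U hU
    obtain ⟨A, hAo, hA1, hAA⟩ := exists_open_nhds_one_mul_subset hU
    obtain ⟨V, hVo, hV1, hVn⟩ := ih A (hAo.mem_nhds hA1)
    refine ⟨V ∩ A, hVo.inter hAo, ⟨hV1, hA1⟩, ?_⟩
    rw [pow_succ]
    calc (V ∩ A) ^ n * (V ∩ A)
        ⊆ V ^ n * A := Set.mul_subset_mul (Set.pow_subset_pow_left Set.inter_subset_left)
          Set.inter_subset_right
      _ ⊆ A * A := Set.mul_subset_mul_right hVn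
      _ ⊆ U := hAA

/-- If `G` has the invariant Steinhaus property with exponent `k` and `H`
is a separable SIN group, then every homomorphism `π : G → H` is continuous. -/
theorem invariant_steinhaus_implies_invariant_automatic_continuity
    {G H : Type*} [Group G] [TopologicalSpace G] [IsTopologicalGroup G]
    [Group H] [TopologicalSpace H] [IsTopologicalGroup H]
    [TopologicalSpace.SeparableSpace H]
    (hSIN : ∀ U ∈ nhds (1 : H), ∃ V ∈ nhds (1 : H), V ⊆ U ∧
      ∀ (h x : H), x ∈ V → h * x * h⁻¹ ∈ V)
    (k : ℕ)
    (hSteinhaus : ∀ W : Set G, W = W⁻¹ →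
      (∀ (g x : G), x ∈ W → g * x * g⁻¹ ∈ W) →
      (∃ f : ℕ → G, ∀ x : G, ∃ n : ℕ, x ∈ f n • W) →
      ∃ U : Set G, IsOpen U ∧ (1 : G) ∈ U ∧ U ⊆ W ^ k)
    (π : G →* H) : Continuous π := by
  apply continuous_of_continuousAt_one π
  rw [ContinuousAt, map_one]
  intro U hU
  rw [Filter.mem_map]
  -- Step 1: a small open nbhd V₀ with V₀ ^ (2k) ⊆ U
  obtain ⟨V₀, hV₀o, hV₀1, hV₀pow⟩ := exists_nhds_one_pow_subset' (2 * k) U hU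
  -- Step 2: a conjugation-invariant nbhd V₁ ⊆ V₀
  obtain ⟨V₁, hV₁n, hV₁sub, hV₁conj⟩ := hSIN V₀ (hV₀o.mem_nhds hV₀1)
  -- Step 3: symmetrize
  set V : Set H := V₁ ∩ V₁⁻¹ with hVdef
  have hVn : V ∈ nhds (1 : H) := by
    apply Filter.inter_mem hV₁n
    exact inv_mem_nhds_one H hV₁n
  have hVsub : V ⊆ V₀ := fun x hx => hV₁sub hx.1
  have hVsymm : V = V⁻¹ := by
    ext x
    simp only [hVdef, Set.mem_inter_iff, Set.mem_inv, inv_inv]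
    tauto
  have hVconj : ∀ (h x : H), x ∈ V → h * x * h⁻¹ ∈ V := by
    intro h x hx
    refine ⟨hV₁conj h x hx.1, ?_⟩
    have := hV₁conj h x⁻¹ hx.2
    simp only [Set.mem_inv]
    simpa [mul_assoc] using this
  have hV1 : (1 : H) ∈ V := mem_of_mem_nhds hVn
  -- The set W
  set W : Set G := π ⁻¹' (V * V) with hWdef
  have hWsymm : W = W⁻¹ := by
    ext x
    simp only [hWdef, Set.mem_preimage, Set.mem_inv, map_inv]
    constructor
    · rintro ⟨a, ha, b, hb, hab⟩
      refine ⟨b⁻¹, ?_, a⁻¹, ?_, by rw [← hab]; simp [mul_comm]⟩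
      · rw [hVsymm] at hb; simpa using hb
      · rw [hVsymm] at ha; simpa using ha
    · rintro ⟨a, ha, b, hb, hab⟩
      refine ⟨b⁻¹, ?_, a⁻¹, ?_, ?_⟩
      · rw [hVsymm] at hb; simpa using hb
      · rw [hVsymm] at ha; simpa using ha
      · have : (π x)⁻¹ = a * b := hab.symm
        calc b⁻¹ * a⁻¹ = (a * b)⁻¹ := by rw [mul_inv_rev]
          _ = ((π x)⁻¹)⁻¹ := by rw [this]
          _ = π x := inv_inv _
  have hWconj : ∀ (g x : G), x ∈ W → g * x * g⁻¹ ∈ W := by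
    intro g x hx
    obtain ⟨a, ha, b, hb, hab⟩ := hx
    refine ⟨π g * a * (π g)⁻¹, hVconj _ _ ha, π g * b * (π g)⁻¹, hVconj _ _ hb, ?_⟩
    simp only [map_mul, map_inv, ← hab]
    group
  have hWsynd : ∃ f : ℕ → G, ∀ x : G, ∃ n : ℕ, x ∈ f n • W := by
    haveI : Nonempty H := ⟨1⟩
    obtain ⟨D, hDc, hDd⟩ := TopologicalSpace.exists_countable_dense H
    -- interior of V is open nonempty
    have hVint : (1 : H) ∈ interior V := mem_interior_iff_mem_nhds.mpr hVn
    -- choice function: for each h : H, if ∃ g, π g ∈ h • V, pick one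
    classical
    haveI : Nonempty G := ⟨1⟩
    choose! sel hsel using fun (h : H) (hex : ∃ g : G, π g ∈ h • V) => hex
    -- enumerate D
    obtain ⟨d, hd⟩ : ∃ d : ℕ → H, D ⊆ Set.range d := by
      rcases D.eq_empty_or_nonempty with hD | hD
      · exact ⟨fun _ => 1, by simp [hD]⟩
      · obtain ⟨d, hd⟩ := (Set.countable_iff_exists_surjective hD).mp hDc
        exact ⟨fun n => (d n : H), fun x hx => by
          obtain ⟨n, hn⟩ := hd ⟨x, hx⟩
          exact ⟨n, congrArg Subtype.val hn⟩⟩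
    refine ⟨fun n => sel (d n), fun x => ?_⟩
    -- find n with d n ∈ π x • interior V
    have hne : (π x • interior V).Nonempty := ⟨π x, ⟨1, hVint, by simp⟩⟩
    have hop : IsOpen (π x • interior V) := isOpen_interior.smul _
    obtain ⟨y, hyD, hyV⟩ := hDd.exists_mem_open hop hne
    obtain ⟨n, hn⟩ := hd hyD
    -- π x ∈ d n • V : since d n = π x * v for some v ∈ V
    obtain ⟨v, hv, hveq⟩ := hyV
    have hdn : d n = π x * v := by rw [hn, ← hveq]; rfl
    have hvV : v ∈ V := interior_subset hv
    have hex : ∃ g : G, π g ∈ d n • V := by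
      refine ⟨x, v⁻¹, ?_, ?_⟩
      · rw [hVsymm]; simpa using hvV
      · simp [hdn, mul_assoc]
    have hsel' : π (sel (d n)) ∈ d n • V := hsel (d n) hex
    refine ⟨n, ?_⟩
    rw [Set.mem_smul_set_iff_inv_smul_mem]
    obtain ⟨w, hw, hweq⟩ := hsel'
    show π ((sel (d n))⁻¹ * x) ∈ V * V
    have h1 : π (sel (d n)) = d n * w := by rw [← hweq]; rfl
    have h2 : π x = d n * v⁻¹ := by rw [hdn]; group
    rw [map_mul, map_inv, h1, h2]
    refine ⟨w⁻¹, by rw [hVsymm]; simpa using hw, v⁻¹, by rw [hVsymm]; simpa using hvV, ?_⟩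
    group
  obtain ⟨U₀, hU₀o, hU₀1, hU₀sub⟩ := hSteinhaus W hWsymm hWconj hWsynd
  apply Filter.mem_of_superset (hU₀o.mem_nhds hU₀1)
  intro x hx
  have hxW : x ∈ W ^ k := hU₀sub hx
  have : π x ∈ (π '' (W ^ k)) := ⟨x, hxW, rfl⟩
  rw [Set.image_pow] at this
  have himg : (π '' W) ^ k ⊆ (V * V) ^ k :=
    Set.pow_subset_pow_left (Set.image_preimage_subset _ _)
  have hpow : (V * V) ^ k ⊆ U := by
    have : (V * V) ^ k = V ^ (2 * k) := by rw [← sq, ← pow_mul]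
    rw [this]
    exact (Set.pow_subset_pow_left hVsub).trans hV₀pow
  exact hpow (himg this)
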